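/- Let q ∈ ℂ* with |q| ≠ 1 and let a ∈ ℂ(z)* be standard and possess at least one zero or pole in ℂ* (i.e. away from 0 and ∞). Then the family {∂^j(∂a/a) : j ∈ ℕ} (where ∂ = z·d/dz) is linearly independent over ℂ modulo (σ_q − id)(ℂ(z)): for any complex numbers λ_0, …, λ_N not all zero, there is no k ∈ ℂ(z) with Σ_{j=0}^N λ_j·∂^j(∂a/a) = σ_q(k) − k. -/

import Mathlib

/-!
Setting: fix `q ∈ ℂ*` with `|q| ≠ 1`.  We work with meromorphic functions on the
punctured plane `ℂ* = {z ≠ 0}`, represented as plain functions `ℂ → ℂ` together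
with a `MeromorphicOn` hypothesis; all identities between meromorphic functions
are understood to hold off a countable (discrete) exceptional set (`MZeroOn`).

* `CE q` is the field `C_E` of `σ_q`-invariant meromorphic functions on `ℂ*`;
* `KE q` is the field `K_E = C_E(z)`;
* `AlgIndepOver U K g` says that the family `g` of meromorphic functions on `U`
  is algebraically independent over the coefficient field `K`: every polynomial
  with coefficients in `K` that vanishes (as meromorphic function on `U`) at the
  family has all its coefficients zero as meromorphic functions;
* `delq` is the derivation `∂ = z·d/dz` on functions, `dRat` the corresponding
  derivation on rational functions;
* `sigmaq q` is the substitution `z ↦ qz` on rational functions `RatFunc ℂ`;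
* `QDE q a f` is the q-difference equation `f(qz) = a(z)·f(z)` as an identity of
  meromorphic functions on `ℂ*` (written without denominators);
* `ordAt a c` is the order of vanishing of the rational function `a` at `c`, and
  `divE q hq a` is the elliptic divisor of `a`, an element of the free abelian
  group on `ℂ*/q^ℤ` (realised as a finitely supported `ℤ`-valued function on the
  quotient group `ℂˣ ⧸ zpowers q`).
-/

open scoped Classical

noncomputable section

/-- The punctured complex plane ℂ*. -/
def Cstar : Set ℂ := {z : ℂ | z ≠ 0}

/-- `f` represents the zero meromorphic function on `U`:
it vanishes off a countable exceptional set. -/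
def MZeroOn (U : Set ℂ) (f : ℂ → ℂ) : Prop :=
  ∃ S : Set ℂ, S.Countable ∧ ∀ z ∈ U \ S, f z = 0

/-- `f` is a nonzero meromorphic function on `U`. -/
def MerNonzero (U : Set ℂ) (f : ℂ → ℂ) : Prop :=
  MeromorphicOn f U ∧ ¬ MZeroOn U f

/-- The derivation ∂ = z·d/dz. -/
def delq (f : ℂ → ℂ) : ℂ → ℂ := fun z => z * deriv f z

/-- The field C_E of σ_q-invariant meromorphic functions on ℂ*. -/
def CE (q : ℂ) : Set (ℂ → ℂ) :=
  {c | MeromorphicOn c Cstar ∧ ∀ z : ℂ, c (q * z) = c z}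

/-- Evaluation of a polynomial with function coefficients at the coordinate z. -/
def evalz (P : Polynomial (ℂ → ℂ)) : ℂ → ℂ :=
  Polynomial.eval (fun z : ℂ => z) P

/-- The field K_E = C_E(z): quotients of polynomials in z with coefficients in C_E. -/
def KE (q : ℂ) : Set (ℂ → ℂ) :=
  {f | ∃ Np Dp : Polynomial (ℂ → ℂ),
        (∀ i, Np.coeff i ∈ CE q) ∧ (∀ i, Dp.coeff i ∈ CE q) ∧
        ¬ MZeroOn Cstar (evalz Dp) ∧
        MZeroOn Cstar (fun z => f z * evalz Dp z - evalz Np z)}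

/-- The family `g` of meromorphic functions on `U` is algebraically independent
over the set `K` of coefficient functions. -/
def AlgIndepOver (U : Set ℂ) (K : Set (ℂ → ℂ)) {ι : Type} (g : ι → ℂ → ℂ) : Prop :=
  ∀ P : MvPolynomial ι (ℂ → ℂ),
    (∀ m, MvPolynomial.coeff m P ∈ K) →
    MZeroOn U (MvPolynomial.eval g P) →
    ∀ m, MZeroOn U (MvPolynomial.coeff m P)

/-- σ_q acting on rational functions: (σ_q a)(z) = a(qz). -/
def sigmaq (q : ℂ) (a : RatFunc ℂ) : RatFunc ℂ :=
  algebraMap (Polynomial ℂ) (RatFunc ℂ) (a.num.comp (Polynomial.C q * Polynomial.X)) /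
    algebraMap (Polynomial ℂ) (RatFunc ℂ) (a.denom.comp (Polynomial.C q * Polynomial.X))

/-- The q-difference equation f(qz) = a(z)·f(z), as an identity of meromorphic
functions on ℂ* (denominators cleared). -/
def QDE (q : ℂ) (a : RatFunc ℂ) (f : ℂ → ℂ) : Prop :=
  MZeroOn Cstar (fun z => f (q * z) * Polynomial.eval z a.denom - Polynomial.eval z a.num * f z)

/-- Order of vanishing of a rational function at a point. -/
def ordAt (a : RatFunc ℂ) (c : ℂ) : ℤ :=
  (Polynomial.rootMultiplicity c a.num : ℤ) - (Polynomial.rootMultiplicity c a.denom : ℤ)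

/-- The elliptic divisor of a rational function: the image in Div(ℂ*/q^ℤ) of the
part of its divisor prime to 0, as a (finitely supported) ℤ-valued function on
the quotient group ℂˣ/q^ℤ. -/
def divE (q : ℂ) (hq : q ≠ 0) (a : RatFunc ℂ) :
    (ℂˣ ⧸ Subgroup.zpowers (Units.mk0 q hq)) → ℤ := fun c =>
  ∑ᶠ α : ℂˣ,
    if (QuotientGroup.mk α : ℂˣ ⧸ Subgroup.zpowers (Units.mk0 q hq)) = c then
      ordAt a (α : ℂ) else 0

/-- An element of ℂ(z)* is standard if no two points of its divisor away from 0
are congruent modulo q^ℤ: if c ∈ ℂ* is a zero or pole of a and m ≠ 0, then q^m·c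
is not a zero or pole of a. -/
def StandardQ (q : ℂ) (a : RatFunc ℂ) : Prop :=
  ∀ c : ℂ, c ≠ 0 → ordAt a c ≠ 0 → ∀ m : ℤ, m ≠ 0 → ordAt a (q ^ m * c) = 0

/-- The derivation ∂ = z·d/dz on rational functions. -/
def dRat (a : RatFunc ℂ) : RatFunc ℂ :=
  RatFunc.X *
    ((algebraMap (Polynomial ℂ) (RatFunc ℂ) (Polynomial.derivative a.num) *
        algebraMap (Polynomial ℂ) (RatFunc ℂ) a.denom -
      algebraMap (Polynomial ℂ) (RatFunc ℂ) a.num *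
        algebraMap (Polynomial ℂ) (RatFunc ℂ) (Polynomial.derivative a.denom)) /
      algebraMap (Polynomial ℂ) (RatFunc ℂ) a.denom ^ 2)

section Statement17Aux
open Polynomial

private lemma alg_ne_zero {P : ℂ[X]} (hP : P ≠ 0) :
    algebraMap ℂ[X] (RatFunc ℂ) P ≠ 0 := RatFunc.algebraMap_ne_zero hP

private lemma ordAt_rep {P Q : ℂ[X]} (hP : P ≠ 0) (hQ : Q ≠ 0) (c : ℂ) :
    ordAt (algebraMap ℂ[X] (RatFunc ℂ) P / algebraMap ℂ[X] (RatFunc ℂ) Q) c =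
      (rootMultiplicity c P : ℤ) - rootMultiplicity c Q := by
  set f := algebraMap ℂ[X] (RatFunc ℂ) P / algebraMap ℂ[X] (RatFunc ℂ) Q with hf
  have hf0 : f ≠ 0 := div_ne_zero (alg_ne_zero hP) (alg_ne_zero hQ)
  have h1 : algebraMap ℂ[X] (RatFunc ℂ) f.num / algebraMap ℂ[X] (RatFunc ℂ) f.denom =
      algebraMap ℂ[X] (RatFunc ℂ) P / algebraMap ℂ[X] (RatFunc ℂ) Q := by
    rw [RatFunc.num_div_denom]
  rw [div_eq_div_iff (alg_ne_zero (RatFunc.denom_ne_zero f)) (alg_ne_zero hQ),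
    ← map_mul, ← map_mul] at h1
  have h2 : f.num * Q = P * f.denom := RatFunc.algebraMap_injective ℂ h1
  have hnum : f.num ≠ 0 := RatFunc.num_ne_zero hf0
  have h3 : rootMultiplicity c (f.num * Q) = rootMultiplicity c (P * f.denom) := by rw [h2]
  rw [rootMultiplicity_mul (mul_ne_zero hnum hQ),
    rootMultiplicity_mul (mul_ne_zero hP (RatFunc.denom_ne_zero f))] at h3
  unfold ordAt
  omega

private lemma ordAt_zero' (c : ℂ) : ordAt 0 c = 0 := by
  unfold ordAt
  simp [RatFunc.num_zero, Polynomial.rootMultiplicity_zero]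

private lemma rm_add_ge {A B : ℂ[X]} {c : ℂ} (h : A + B ≠ 0) :
    min (rootMultiplicity c A) (rootMultiplicity c B) ≤ rootMultiplicity c (A + B) :=
  rootMultiplicity_add c h

private lemma ordAt_add_ge {f g : RatFunc ℂ} (hf : f ≠ 0) (hg : g ≠ 0) (hfg : f + g ≠ 0)
    (c : ℂ) : min (ordAt f c) (ordAt g c) ≤ ordAt (f + g) c := by
  have hrep : f + g = algebraMap ℂ[X] (RatFunc ℂ) (f.num * g.denom + g.num * f.denom) /
      algebraMap ℂ[X] (RatFunc ℂ) (f.denom * g.denom) := by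
    conv_lhs => rw [← RatFunc.num_div_denom f, ← RatFunc.num_div_denom g]
    rw [div_add_div _ _ (alg_ne_zero (RatFunc.denom_ne_zero f))
      (alg_ne_zero (RatFunc.denom_ne_zero g)), map_add, map_mul, map_mul, map_mul]
    ring_nf
  have hNsum : f.num * g.denom + g.num * f.denom ≠ 0 := by
    intro h0
    rw [hrep, h0, map_zero, zero_div] at hfg
    exact hfg rfl
  have hD : f.denom * g.denom ≠ 0 :=
    mul_ne_zero (RatFunc.denom_ne_zero f) (RatFunc.denom_ne_zero g)
  rw [hrep, ordAt_rep hNsum hD]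
  have h1 := rm_add_ge (c := c) hNsum
  rw [rootMultiplicity_mul (mul_ne_zero (RatFunc.num_ne_zero hf) (RatFunc.denom_ne_zero g)),
    rootMultiplicity_mul (mul_ne_zero (RatFunc.num_ne_zero hg) (RatFunc.denom_ne_zero f))] at h1
  rw [rootMultiplicity_mul hD]
  unfold ordAt
  omega

private lemma rm_neg (P : ℂ[X]) (c : ℂ) :
    rootMultiplicity c (-P) = rootMultiplicity c P := by
  by_cases hP : P = 0
  · simp [hP]
  · have h : -P = C (-1 : ℂ) * P := by simp
    rw [h, rootMultiplicity_mul (by simp [hP]),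
      rootMultiplicity_eq_zero (by simp [IsRoot]), zero_add]

private lemma ordAt_neg (f : RatFunc ℂ) (c : ℂ) : ordAt (-f) c = ordAt f c := by
  by_cases hf : f = 0
  · simp [hf]
  · have hrep : -f = algebraMap ℂ[X] (RatFunc ℂ) (-f.num) /
        algebraMap ℂ[X] (RatFunc ℂ) f.denom := by
      conv_lhs => rw [← RatFunc.num_div_denom f]
      rw [map_neg]
      ring
    rw [hrep, ordAt_rep (neg_ne_zero.mpr (RatFunc.num_ne_zero hf)) (RatFunc.denom_ne_zero f),
      rm_neg]
    unfold ordAt; ring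

private lemma ordAt_add_eq {f g : RatFunc ℂ} (hf : f ≠ 0) (hg : g ≠ 0)
    {c : ℂ} (h : ordAt f c < ordAt g c) :
    f + g ≠ 0 ∧ ordAt (f + g) c = ordAt f c := by
  have hfg : f + g ≠ 0 := by
    intro h0
    have hgf : g = -f := by linear_combination h0
    rw [hgf, ordAt_neg] at h
    exact lt_irrefl _ h
  refine ⟨hfg, le_antisymm ?_ ?_⟩
  · have h3 := ordAt_add_ge hfg (neg_ne_zero.mpr hg) (by rw [add_neg_cancel_right]; exact hf) c
    rw [add_neg_cancel_right, ordAt_neg] at h3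
    omega
  · have := ordAt_add_ge hf hg hfg c
    omega

private lemma comp_qX_ne_zero {q : ℂ} (hq0 : q ≠ 0) {P : ℂ[X]} (hP : P ≠ 0) :
    P.comp (C q * X) ≠ 0 := by
  intro hcon
  rw [comp_eq_zero_iff] at hcon
  rcases hcon with h | ⟨-, h⟩
  · exact hP h
  · have := congrArg (fun p => p.coeff 1) h
    simp [coeff_C] at this
    exact hq0 this

private lemma comp_qX_comp (q₁ q₂ : ℂ) (P : ℂ[X]) :
    (P.comp (C q₁ * X)).comp (C q₂ * X) = P.comp (C (q₁ * q₂) * X) := by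
  rw [comp_assoc, mul_comp, C_comp, X_comp, map_mul, mul_assoc]

private lemma rm_comp_le {q : ℂ} (hq0 : q ≠ 0) {P : ℂ[X]} (hP : P ≠ 0) (c : ℂ) :
    rootMultiplicity (q * c) P ≤ rootMultiplicity c (P.comp (C q * X)) := by
  rw [le_rootMultiplicity_iff (comp_qX_ne_zero hq0 hP)]
  set n := rootMultiplicity (q * c) P with hn
  obtain ⟨S, hS⟩ := pow_rootMultiplicity_dvd P (q * c)
  rw [← hn] at hS
  refine ⟨C q ^ n * S.comp (C q * X), ?_⟩
  rw [hS, mul_comp, pow_comp, sub_comp, X_comp, C_comp, map_mul, ← mul_sub, mul_pow]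
  ring

private lemma rm_comp {q : ℂ} (hq0 : q ≠ 0) {P : ℂ[X]} (hP : P ≠ 0) (c : ℂ) :
    rootMultiplicity c (P.comp (C q * X)) = rootMultiplicity (q * c) P := by
  refine le_antisymm ?_ (rm_comp_le hq0 hP c)
  have h2 := rm_comp_le (inv_ne_zero hq0) (comp_qX_ne_zero hq0 hP) (q * c)
  rw [comp_qX_comp, mul_inv_cancel₀ hq0, map_one, one_mul, comp_X,
    inv_mul_cancel_left₀ hq0] at h2
  exact h2

private lemma PL {c : ℂ} (hc : c ≠ 0) {Np Dp : ℂ[X]} (hN : Np.eval c ≠ 0) (hD : Dp ≠ 0)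
    (hm : 1 ≤ rootMultiplicity c Dp) :
    X * (derivative Np * Dp - Np * derivative Dp) ≠ 0 ∧
      rootMultiplicity c (X * (derivative Np * Dp - Np * derivative Dp)) =
        rootMultiplicity c Dp - 1 := by
  set m := rootMultiplicity c Dp with hm'
  set E := Dp /ₘ (X - C c) ^ m with hE'
  have hDeq : (X - C c) ^ m * E = Dp := pow_mul_divByMonic_rootMultiplicity_eq Dp c
  have hEc : E.eval c ≠ 0 := eval_divByMonic_pow_rootMultiplicity_ne_zero c hD
  have hpow : (X - C c) ^ m = (X - C c) ^ (m - 1) * (X - C c) := by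
    rw [← pow_succ]; congr 1; omega
  have hdD : derivative Dp = C (m : ℂ) * (X - C c) ^ (m - 1) * E
      + (X - C c) ^ m * derivative E := by
    rw [← hDeq, derivative_mul, derivative_X_sub_C_pow]
  set G : ℂ[X] := derivative Np * ((X - C c) * E)
      - Np * (C (m : ℂ) * E + (X - C c) * derivative E) with hG'
  have hfact : derivative Np * Dp - Np * derivative Dp = (X - C c) ^ (m - 1) * G := by
    rw [hG', hdD, ← hDeq, hpow]; ring
  have hGc : G.eval c = -(Np.eval c * ((m : ℂ) * E.eval c)) := by
    simp [hG']
  have hGcne : G.eval c ≠ 0 := by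
    rw [hGc]
    have hmC : (m : ℂ) ≠ 0 := Nat.cast_ne_zero.mpr (by omega)
    exact neg_ne_zero.mpr (mul_ne_zero hN (mul_ne_zero hmC hEc))
  have hG0 : G ≠ 0 := fun h => hGcne (by rw [h]; simp)
  have hrmG : rootMultiplicity c G = 0 :=
    rootMultiplicity_eq_zero (by simpa [IsRoot] using hGcne)
  have hrmX : rootMultiplicity c (X : ℂ[X]) = 0 :=
    rootMultiplicity_eq_zero (by simpa [IsRoot] using hc)
  have hXsub : (X - C c : ℂ[X]) ^ (m - 1) ≠ 0 := pow_ne_zero _ (X_sub_C_ne_zero c)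
  have hne : X * (derivative Np * Dp - Np * derivative Dp) ≠ 0 := by
    rw [hfact]
    exact mul_ne_zero X_ne_zero (mul_ne_zero hXsub hG0)
  refine ⟨hne, ?_⟩
  rw [hfact, rootMultiplicity_mul (by rw [← hfact]; exact hne),
    rootMultiplicity_mul (mul_ne_zero hXsub hG0), hrmX, hrmG,
    rootMultiplicity_X_sub_C_pow]
  omega

private lemma dRat_rep (f : RatFunc ℂ) :
    dRat f = algebraMap ℂ[X] (RatFunc ℂ)
        (X * (derivative f.num * f.denom - f.num * derivative f.denom)) /
      algebraMap ℂ[X] (RatFunc ℂ) (f.denom ^ 2) := by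
  unfold dRat
  rw [map_mul, map_sub, map_mul, map_mul, map_pow, RatFunc.algebraMap_X, mul_div_assoc]

private lemma num_denom_not_both_root (f : RatFunc ℂ) (c : ℂ) :
    f.num.eval c ≠ 0 ∨ f.denom.eval c ≠ 0 := by
  by_contra h
  push_neg at h
  obtain ⟨u, v, huv⟩ := RatFunc.isCoprime_num_denom f
  have h2 := congrArg (Polynomial.eval c) huv
  simp [h.1, h.2] at h2

private lemma dRat_pole {f : RatFunc ℂ} {c : ℂ} (hc : c ≠ 0) (hf : f ≠ 0)
    (h : ordAt f c < 0) : dRat f ≠ 0 ∧ ordAt (dRat f) c = ordAt f c - 1 := by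
  have hD := RatFunc.denom_ne_zero f
  have hNum := RatFunc.num_ne_zero hf
  have h' : (rootMultiplicity c f.num : ℤ) - rootMultiplicity c f.denom < 0 := h
  have hm : 1 ≤ rootMultiplicity c f.denom := by omega
  have hden_root : f.denom.eval c = 0 := (rootMultiplicity_pos hD).mp (by omega)
  have hNc : f.num.eval c ≠ 0 :=
    (num_denom_not_both_root f c).resolve_right (by simp [hden_root])
  have hn0 : rootMultiplicity c f.num = 0 :=
    rootMultiplicity_eq_zero (by simpa [IsRoot] using hNc)
  obtain ⟨hP0, hPrm⟩ := PL hc hNc hD hm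
  have hD2 : f.denom ^ 2 ≠ 0 := pow_ne_zero 2 hD
  refine ⟨by rw [dRat_rep]; exact div_ne_zero (alg_ne_zero hP0) (alg_ne_zero hD2), ?_⟩
  rw [dRat_rep, ordAt_rep hP0 hD2, hPrm, sq, rootMultiplicity_mul (mul_ne_zero hD hD)]
  show _ = (rootMultiplicity c f.num : ℤ) - rootMultiplicity c f.denom - 1
  omega

private lemma dRat_reg {f : RatFunc ℂ} {c : ℂ} (hc : c ≠ 0)
    (h : f = 0 ∨ 0 ≤ ordAt f c) : dRat f = 0 ∨ 0 ≤ ordAt (dRat f) c := by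
  by_cases hf : f = 0
  · left
    rw [hf]
    unfold dRat
    simp
  have hord : 0 ≤ ordAt f c := h.resolve_left hf
  have hord' : 0 ≤ (rootMultiplicity c f.num : ℤ) - rootMultiplicity c f.denom := hord
  have hD := RatFunc.denom_ne_zero f
  by_cases hP : X * (derivative f.num * f.denom - f.num * derivative f.denom) = 0
  · left
    rw [dRat_rep, hP, map_zero, zero_div]
  right
  have hm0 : rootMultiplicity c f.denom = 0 := by
    by_contra hm
    have hroot : f.denom.IsRoot c := (rootMultiplicity_pos hD).mp (Nat.pos_of_ne_zero hm)
    have hNc : f.num.eval c ≠ 0 :=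
      (num_denom_not_both_root f c).resolve_right (by simpa [IsRoot] using hroot)
    have hn0 : rootMultiplicity c f.num = 0 :=
      rootMultiplicity_eq_zero (by simpa [IsRoot] using hNc)
    have : 0 < rootMultiplicity c f.denom := Nat.pos_of_ne_zero hm
    omega
  have hD2 : f.denom ^ 2 ≠ 0 := pow_ne_zero 2 hD
  rw [dRat_rep, ordAt_rep hP hD2, sq, rootMultiplicity_mul (mul_ne_zero hD hD), hm0]
  simp

private lemma sigmaq_zero' (q : ℂ) : sigmaq q 0 = 0 := by
  unfold sigmaq
  simp

private lemma sigmaq_ne_zero {q : ℂ} (hq0 : q ≠ 0) {f : RatFunc ℂ} (hf : f ≠ 0) :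
    sigmaq q f ≠ 0 := by
  unfold sigmaq
  exact div_ne_zero (alg_ne_zero (comp_qX_ne_zero hq0 (RatFunc.num_ne_zero hf)))
    (alg_ne_zero (comp_qX_ne_zero hq0 (RatFunc.denom_ne_zero f)))

private lemma ordAt_sigmaq {q : ℂ} (hq0 : q ≠ 0) {f : RatFunc ℂ} (hf : f ≠ 0) (c : ℂ) :
    ordAt (sigmaq q f) c = ordAt f (q * c) := by
  unfold sigmaq
  rw [ordAt_rep (comp_qX_ne_zero hq0 (RatFunc.num_ne_zero hf))
    (comp_qX_ne_zero hq0 (RatFunc.denom_ne_zero f)),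
    rm_comp hq0 (RatFunc.num_ne_zero hf), rm_comp hq0 (RatFunc.denom_ne_zero f)]
  rfl

private lemma div_a_rep (a : RatFunc ℂ) (ha : a ≠ 0) :
    dRat a / a = algebraMap ℂ[X] (RatFunc ℂ)
        (X * (derivative a.num * a.denom - a.num * derivative a.denom) * a.denom) /
      algebraMap ℂ[X] (RatFunc ℂ) (a.denom ^ 2 * a.num) := by
  have h1 : algebraMap ℂ[X] (RatFunc ℂ) a.num ≠ 0 := alg_ne_zero (RatFunc.num_ne_zero ha)
  have h2 : algebraMap ℂ[X] (RatFunc ℂ) a.denom ≠ 0 := alg_ne_zero (RatFunc.denom_ne_zero a)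
  rw [dRat_rep]
  set Np := a.num with hN
  set Dp := a.denom with hD
  have ha' : a = algebraMap ℂ[X] (RatFunc ℂ) Np / algebraMap ℂ[X] (RatFunc ℂ) Dp :=
    (RatFunc.num_div_denom a).symm
  rw [ha', map_mul, map_mul, map_pow]
  field_simp
  simp only [map_mul, map_pow]; ring

private lemma ord_f0_pole {a : RatFunc ℂ} (ha : a ≠ 0) {c : ℂ} (hc : c ≠ 0)
    (hord : ordAt a c ≠ 0) : dRat a / a ≠ 0 ∧ ordAt (dRat a / a) c = -1 := by
  have hD := RatFunc.denom_ne_zero a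
  have hNum := RatFunc.num_ne_zero ha
  have hord' : (rootMultiplicity c a.num : ℤ) - rootMultiplicity c a.denom ≠ 0 := hord
  have hrep := div_a_rep a ha
  rcases num_denom_not_both_root a c with hNc | hDc
  · have hn0 : rootMultiplicity c a.num = 0 :=
      rootMultiplicity_eq_zero (by simpa [IsRoot] using hNc)
    have hm1 : 1 ≤ rootMultiplicity c a.denom := by omega
    obtain ⟨hP0, hPrm⟩ := PL hc hNc hD hm1
    have hnum_ne : X * (derivative a.num * a.denom - a.num * derivative a.denom) * a.denom ≠ 0 :=
      mul_ne_zero hP0 hD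
    have hden_ne : a.denom ^ 2 * a.num ≠ 0 := mul_ne_zero (pow_ne_zero 2 hD) hNum
    refine ⟨by rw [hrep]; exact div_ne_zero (alg_ne_zero hnum_ne) (alg_ne_zero hden_ne), ?_⟩
    rw [hrep, ordAt_rep hnum_ne hden_ne, rootMultiplicity_mul hnum_ne, hPrm,
      rootMultiplicity_mul hden_ne, sq, rootMultiplicity_mul (mul_ne_zero hD hD)]
    omega
  · have hm0 : rootMultiplicity c a.denom = 0 :=
      rootMultiplicity_eq_zero (by simpa [IsRoot] using hDc)
    have hn1 : 1 ≤ rootMultiplicity c a.num := by omega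
    obtain ⟨hQ0, hQrm⟩ := PL hc hDc hNum hn1
    have hPQ : X * (derivative a.num * a.denom - a.num * derivative a.denom)
        = -(X * (derivative a.denom * a.num - a.denom * derivative a.num)) := by ring
    have hP0 : X * (derivative a.num * a.denom - a.num * derivative a.denom) ≠ 0 := by
      rw [hPQ]; exact neg_ne_zero.mpr hQ0
    have hPrm : rootMultiplicity c
        (X * (derivative a.num * a.denom - a.num * derivative a.denom))
        = rootMultiplicity c a.num - 1 := by
      rw [hPQ, rm_neg, hQrm]
    have hnum_ne : X * (derivative a.num * a.denom - a.num * derivative a.denom) * a.denom ≠ 0 :=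
      mul_ne_zero hP0 hD
    have hden_ne : a.denom ^ 2 * a.num ≠ 0 := mul_ne_zero (pow_ne_zero 2 hD) hNum
    refine ⟨by rw [hrep]; exact div_ne_zero (alg_ne_zero hnum_ne) (alg_ne_zero hden_ne), ?_⟩
    rw [hrep, ordAt_rep hnum_ne hden_ne, rootMultiplicity_mul hnum_ne, hPrm,
      rootMultiplicity_mul hden_ne, sq, rootMultiplicity_mul (mul_ne_zero hD hD)]
    omega

private lemma ord_f0_reg {a : RatFunc ℂ} (ha : a ≠ 0) {c : ℂ} (hc : c ≠ 0)
    (hord : ordAt a c = 0) : dRat a / a = 0 ∨ 0 ≤ ordAt (dRat a / a) c := by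
  have hD := RatFunc.denom_ne_zero a
  have hNum := RatFunc.num_ne_zero ha
  have hord' : (rootMultiplicity c a.num : ℤ) - rootMultiplicity c a.denom = 0 := hord
  have hrep := div_a_rep a ha
  by_cases hP : X * (derivative a.num * a.denom - a.num * derivative a.denom) * a.denom = 0
  · left
    rw [hrep, hP, map_zero, zero_div]
  right
  have hnm : rootMultiplicity c a.num = 0 ∧ rootMultiplicity c a.denom = 0 := by
    rcases num_denom_not_both_root a c with hNc | hDc
    · have := rootMultiplicity_eq_zero (p := a.num) (x := c) (by simpa [IsRoot] using hNc)
      omega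
    · have := rootMultiplicity_eq_zero (p := a.denom) (x := c) (by simpa [IsRoot] using hDc)
      omega
  have hden_ne : a.denom ^ 2 * a.num ≠ 0 := mul_ne_zero (pow_ne_zero 2 hD) hNum
  rw [hrep, ordAt_rep hP hden_ne, rootMultiplicity_mul hden_ne, sq,
    rootMultiplicity_mul (mul_ne_zero hD hD), hnm.1, hnm.2]
  simp

private lemma ordAt_C_mul {l : ℂ} (hl : l ≠ 0) {f : RatFunc ℂ} (hf : f ≠ 0) (c : ℂ) :
    RatFunc.C l * f ≠ 0 ∧ ordAt (RatFunc.C l * f) c = ordAt f c := by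
  have hCl : (RatFunc.C l : RatFunc ℂ) = algebraMap ℂ[X] (RatFunc ℂ) (Polynomial.C l) :=
    (RatFunc.algebraMap_C l).symm
  have hCl0 : (Polynomial.C l : ℂ[X]) ≠ 0 := by
    simpa using hl
  have hne : RatFunc.C l * f ≠ 0 := mul_ne_zero (by rw [hCl]; exact alg_ne_zero hCl0) hf
  refine ⟨hne, ?_⟩
  have hrep : RatFunc.C l * f = algebraMap ℂ[X] (RatFunc ℂ) (Polynomial.C l * f.num) /
      algebraMap ℂ[X] (RatFunc ℂ) f.denom := by
    rw [map_mul, ← hCl, mul_div_assoc, RatFunc.num_div_denom]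
  rw [hrep, ordAt_rep (mul_ne_zero hCl0 (RatFunc.num_ne_zero hf)) (RatFunc.denom_ne_zero f),
    rootMultiplicity_mul (mul_ne_zero hCl0 (RatFunc.num_ne_zero hf)),
    rootMultiplicity_eq_zero (p := Polynomial.C l) (x := c) (by simp [IsRoot, hl])]
  unfold ordAt
  omega

private lemma iter_pole {f : RatFunc ℂ} {c : ℂ} (hc : c ≠ 0) (hf : f ≠ 0)
    (h1 : ordAt f c = -1) (j : ℕ) :
    dRat^[j] f ≠ 0 ∧ ordAt (dRat^[j] f) c = -((j : ℤ) + 1) := by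
  induction j with
  | zero =>
    refine ⟨hf, ?_⟩
    simpa using h1
  | succ n ih =>
    rw [Function.iterate_succ_apply']
    obtain ⟨h0, hord⟩ := dRat_pole hc ih.1 (by rw [ih.2]; omega)
    refine ⟨h0, ?_⟩
    rw [hord, ih.2]
    push_cast
    ring

private lemma iter_reg {f : RatFunc ℂ} {c : ℂ} (hc : c ≠ 0)
    (h : f = 0 ∨ 0 ≤ ordAt f c) (j : ℕ) :
    dRat^[j] f = 0 ∨ 0 ≤ ordAt (dRat^[j] f) c := by
  induction j with
  | zero => simpa using h
  | succ n ih =>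
    rw [Function.iterate_succ_apply']
    exact dRat_reg hc ih

private lemma ordAt_sum {s : Finset ℕ} {g : ℕ → RatFunc ℂ} {c : ℂ} {t : ℤ}
    (h : ∀ j ∈ s, g j = 0 ∨ (g j ≠ 0 ∧ t ≤ ordAt (g j) c)) :
    (∑ j ∈ s, g j) = 0 ∨ ((∑ j ∈ s, g j) ≠ 0 ∧ t ≤ ordAt (∑ j ∈ s, g j) c) := by
  induction s using Finset.induction_on with
  | empty => left; simp
  | @insert j s' hjs ih =>
    rw [Finset.sum_insert hjs]
    have hj := h j (Finset.mem_insert_self j s')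
    have hrest := ih (fun i hi => h i (Finset.mem_insert_of_mem hi))
    rcases hj with hj0 | ⟨hjne, hjord⟩
    · rw [hj0, zero_add]
      exact hrest
    rcases hrest with hr0 | ⟨hrne, hrord⟩
    · rw [hr0, add_zero]
      right
      exact ⟨hjne, hjord⟩
    by_cases hsum : g j + ∑ i ∈ s', g i = 0
    · left; exact hsum
    right
    exact ⟨hsum, le_trans (le_min hjord hrord) (ordAt_add_ge hjne hrne hsum c)⟩

end Statement17Aux

/-- Lemme 4.16. If `a ∈ ℂ(z)*` is standard and has a zero or
pole in `ℂ*`, then the family `{∂^j(∂a/a) : j ∈ ℕ}` is `ℂ`-linearly independent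
modulo `(σ_q − id)(ℂ(z))`: for `λ₀, …, λ_N ∈ ℂ` not all zero, there is no
`k ∈ ℂ(z)` with `Σ_{j≤N} λⱼ·∂^j(∂a/a) = σ_q(k) − k`. -/
theorem statement17 (q : ℂ) (hq0 : q ≠ 0) (hq : ‖q‖ ≠ 1)
    (a : RatFunc ℂ) (ha : a ≠ 0) (hstd : StandardQ q a)
    (hzp : ∃ c : ℂ, c ≠ 0 ∧ ordAt a c ≠ 0)
    (N : ℕ) (lam : ℕ → ℂ) (hlam : ∃ j ≤ N, lam j ≠ 0) :
    ¬ ∃ k : RatFunc ℂ,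
        (∑ j ∈ Finset.range (N + 1), RatFunc.C (lam j) * dRat^[j] (dRat a / a)) =
          sigmaq q k - k := by
  classical
  rintro ⟨k, hk⟩
  obtain ⟨c, hc0, hac⟩ := hzp
  obtain ⟨hf0ne, hf0ord⟩ := ord_f0_pole ha hc0 hac
  set f0 := dRat a / a with hf0def
  -- the leading index J
  set T0 : Finset ℕ := (Finset.range (N + 1)).filter (fun j => lam j ≠ 0) with hT0
  have hT0ne : T0.Nonempty := by
    obtain ⟨j, hjN, hj0⟩ := hlam
    exact ⟨j, Finset.mem_filter.mpr ⟨Finset.mem_range.mpr (Nat.lt_succ_of_le hjN), hj0⟩⟩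
  set J := T0.max' hT0ne with hJ
  have hJmem := T0.max'_mem hT0ne
  have hJN : J ∈ Finset.range (N + 1) := (Finset.mem_filter.mp hJmem).1
  have hlamJ : lam J ≠ 0 := (Finset.mem_filter.mp hJmem).2
  set b := ∑ j ∈ Finset.range (N + 1), RatFunc.C (lam j) * dRat^[j] f0 with hb
  -- b has a pole of exact order J+1 at c
  have hbc : b ≠ 0 ∧ ordAt b c = -((J : ℤ) + 1) := by
    have hsplit : b = RatFunc.C (lam J) * dRat^[J] f0 +
        ∑ j ∈ (Finset.range (N + 1)).erase J, RatFunc.C (lam j) * dRat^[j] f0 :=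
      (Finset.add_sum_erase _ _ hJN).symm
    have hiter := iter_pole hc0 hf0ne hf0ord J
    have hmain := ordAt_C_mul hlamJ hiter.1 c
    have hmain_ord : ordAt (RatFunc.C (lam J) * dRat^[J] f0) c = -((J : ℤ) + 1) := by
      rw [hmain.2, hiter.2]
    have hrest := ordAt_sum (s := (Finset.range (N + 1)).erase J)
        (g := fun j => RatFunc.C (lam j) * dRat^[j] f0) (c := c) (t := -(J : ℤ)) ?_
    · rcases hrest with hr0 | ⟨hrne, hrord⟩
      · rw [hsplit, hr0, add_zero]
        exact ⟨hmain.1, hmain_ord⟩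
      · have hlt : ordAt (RatFunc.C (lam J) * dRat^[J] f0) c <
            ordAt (∑ j ∈ (Finset.range (N + 1)).erase J, RatFunc.C (lam j) * dRat^[j] f0) c := by
          rw [hmain_ord]; omega
        have hres := ordAt_add_eq hmain.1 hrne hlt
        rw [hsplit]
        exact ⟨hres.1, by rw [hres.2, hmain_ord]⟩
    · intro j hj
      beta_reduce
      rcases eq_or_ne (lam j) 0 with h0 | h0
      · left; rw [h0, map_zero, zero_mul]
      · right
        have hjT0 : j ∈ T0 := Finset.mem_filter.mpr ⟨Finset.mem_of_mem_erase hj, h0⟩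
        have hjJ : j ≤ J := T0.le_max' j hjT0
        have hjJ' : j ≠ J := Finset.ne_of_mem_erase hj
        have hiterj := iter_pole hc0 hf0ne hf0ord j
        have hj2 := ordAt_C_mul h0 hiterj.1 c
        refine ⟨hj2.1, ?_⟩
        rw [hj2.2, hiterj.2]
        have : j < J := lt_of_le_of_ne hjJ hjJ'
        omega
  -- b is regular at q^m c for m ≠ 0
  have hbreg : ∀ m : ℤ, m ≠ 0 → 0 ≤ ordAt b (q ^ m * c) := by
    intro m hm
    have hqmc : q ^ m * c ≠ 0 := mul_ne_zero (zpow_ne_zero m hq0) hc0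
    have haz : ordAt a (q ^ m * c) = 0 := hstd c hc0 hac m hm
    have hreg0 : f0 = 0 ∨ 0 ≤ ordAt f0 (q ^ m * c) := ord_f0_reg ha hqmc haz
    have hsum := ordAt_sum (s := Finset.range (N + 1))
        (g := fun j => RatFunc.C (lam j) * dRat^[j] f0) (c := q ^ m * c) (t := 0) ?_
    · rcases hsum with h0 | ⟨_, hord⟩
      · exact absurd h0 hbc.1
      · exact hord
    · intro j hj
      beta_reduce
      rcases eq_or_ne (lam j) 0 with h0 | h0
      · left; rw [h0, map_zero, zero_mul]
      by_cases hz : dRat^[j] f0 = 0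
      · left; rw [hz, mul_zero]
      right
      have hreg := (iter_reg hqmc hreg0 j).resolve_left hz
      have hj2 := ordAt_C_mul h0 hz (q ^ m * c)
      exact ⟨hj2.1, by rw [hj2.2]; exact hreg⟩
  -- now suppose b = σ(k) - k
  rcases eq_or_ne k 0 with hk0 | hk0
  · rw [hk0, sigmaq_zero', sub_zero] at hk
    exact hbc.1 hk
  have hσne : sigmaq q k ≠ 0 := sigmaq_ne_zero hq0 hk0
  have hptm : ∀ m : ℤ, q * (q ^ m * c) = q ^ (m + 1) * c := by
    intro m
    rw [← mul_assoc]
    congr 1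
    rw [zpow_add_one₀ hq0, mul_comm]
  have hkord : ∀ m : ℤ, ordAt (sigmaq q k) (q ^ m * c) = ordAt k (q ^ (m + 1) * c) := by
    intro m
    rw [ordAt_sigmaq hq0 hk0, hptm]
  have hbsum : b = sigmaq q k + -k := by rw [hk]; ring
  have hbsum2 : b = -k + sigmaq q k := by rw [hk]; ring
  -- injectivity of the orbit map
  have hinj : Function.Injective (fun m : ℤ => q ^ m * c) := by
    intro m1 m2 h
    have h2 : q ^ m1 = q ^ m2 := mul_right_cancel₀ hc0 h
    have h3 : ‖q‖ ^ m1 = ‖q‖ ^ m2 := by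
      rw [← norm_zpow, ← norm_zpow, h2]
    have habs : (0 : ℝ) < ‖q‖ := norm_pos_iff.mpr hq0
    exact zpow_right_injective₀ habs hq h3
  -- finiteness of the pole set of k on the orbit
  have hfin : Set.Finite {m : ℤ | ordAt k (q ^ m * c) < 0} := by
    have hroots : Set.Finite {x : ℂ | k.denom.IsRoot x} :=
      Polynomial.finite_setOf_isRoot (RatFunc.denom_ne_zero k)
    refine Set.Finite.of_finite_image (hroots.subset ?_) (Function.Injective.injOn hinj)
    rintro x ⟨m, hm, rfl⟩
    have hm' : (Polynomial.rootMultiplicity (q ^ m * c) k.num : ℤ) -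
        Polynomial.rootMultiplicity (q ^ m * c) k.denom < 0 := hm
    have : 0 < Polynomial.rootMultiplicity (q ^ m * c) k.denom := by omega
    exact (Polynomial.rootMultiplicity_pos (RatFunc.denom_ne_zero k)).mp this
  have hpt0 : (q : ℂ) ^ (0 : ℤ) * c = c := by simp
  rcases Set.eq_empty_or_nonempty {m : ℤ | ordAt k (q ^ m * c) < 0} with hSe | hSne
  · -- no poles of k on the orbit: b regular at c, contradiction
    have h0le : ∀ m : ℤ, 0 ≤ ordAt k (q ^ m * c) := by
      intro m
      by_contra hlt
      push_neg at hlt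
      exact Set.eq_empty_iff_forall_notMem.mp hSe m hlt
    have hσ : 0 ≤ ordAt (sigmaq q k) (q ^ (0 : ℤ) * c) := by
      rw [hkord]; exact h0le 1
    have hK : 0 ≤ ordAt (-k) (q ^ (0 : ℤ) * c) := by
      rw [ordAt_neg]; exact h0le 0
    have hge := ordAt_add_ge hσne (neg_ne_zero.mpr hk0)
      (by rw [← hbsum]; exact hbc.1) (q ^ (0 : ℤ) * c)
    rw [← hbsum, hpt0] at hge
    rw [hpt0] at hσ hK
    have h1 : (0 : ℤ) ≤ ordAt b c := le_trans (le_min hσ hK) hge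
    have h2 := hbc.2
    omega
  · -- k has poles on the orbit
    set F : Finset ℤ := hfin.toFinset with hF
    have hFne : F.Nonempty := by
      obtain ⟨m, hm⟩ := hSne
      exact ⟨m, (Set.Finite.mem_toFinset hfin).mpr hm⟩
    have hμmem := Finset.min'_mem (F.image (fun m => ordAt k (q ^ m * c)))
      (hFne.image _)
    set μ := (F.image (fun m => ordAt k (q ^ m * c))).min' (hFne.image _) with hμ
    obtain ⟨m₀, hm₀F, hm₀val⟩ := Finset.mem_image.mp hμmem
    have hμneg : μ < 0 := by
      have := (Set.Finite.mem_toFinset hfin).mp hm₀F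
      rw [← hm₀val]
      exact this
    have hμle : ∀ m : ℤ, μ ≤ ordAt k (q ^ m * c) := by
      intro m
      by_cases hm : m ∈ F
      · exact Finset.min'_le _ _ (Finset.mem_image_of_mem _ hm)
      · have : ¬ ordAt k (q ^ m * c) < 0 :=
          fun hlt => hm ((Set.Finite.mem_toFinset hfin).mpr hlt)
        omega
    set T : Finset ℤ := F.filter (fun m => ordAt k (q ^ m * c) = μ) with hT
    have hTmem : ∀ m : ℤ, ordAt k (q ^ m * c) = μ → m ∈ T := by
      intro m hm
      exact Finset.mem_filter.mpr
        ⟨(Set.Finite.mem_toFinset hfin).mpr (by rw [Set.mem_setOf_eq, hm]; exact hμneg), hm⟩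
    have hTne : T.Nonempty := ⟨m₀, hTmem m₀ hm₀val⟩
    set m1 := T.min' hTne with hm1def
    set m2 := T.max' hTne with hm2def
    have hm1 : ordAt k (q ^ m1 * c) = μ := (Finset.mem_filter.mp (T.min'_mem hTne)).2
    have hm2 : ordAt k (q ^ m2 * c) = μ := (Finset.mem_filter.mp (T.max'_mem hTne)).2
    have hm1m2 : m1 ≤ m2 := T.min'_le _ (T.max'_mem hTne)
    -- pole of b at q^(m1-1) c
    have hA : ordAt (sigmaq q k) (q ^ (m1 - 1) * c) = μ := by
      rw [hkord, sub_add_cancel]; exact hm1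
    have hBgt : ordAt (sigmaq q k) (q ^ (m1 - 1) * c) < ordAt (-k) (q ^ (m1 - 1) * c) := by
      rw [hA, ordAt_neg]
      rcases lt_or_eq_of_le (hμle (m1 - 1)) with h | h
      · exact h
      · exfalso
        have := T.min'_le _ (hTmem (m1 - 1) h.symm)
        omega
    have h5 := ordAt_add_eq hσne (neg_ne_zero.mpr hk0) hBgt
    have hb1 : ordAt b (q ^ (m1 - 1) * c) = μ := by
      rw [hbsum, h5.2, hA]
    have hm1eq : m1 = 1 := by
      by_contra hne
      have := hbreg (m1 - 1) (by omega)
      omega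
    -- pole of b at q^m2 c
    have hA2 : ordAt (-k) (q ^ m2 * c) = μ := by rw [ordAt_neg]; exact hm2
    have hB2 : ordAt (-k) (q ^ m2 * c) < ordAt (sigmaq q k) (q ^ m2 * c) := by
      rw [hA2, hkord]
      rcases lt_or_eq_of_le (hμle (m2 + 1)) with h | h
      · exact h
      · exfalso
        have := T.le_max' _ (hTmem (m2 + 1) h.symm)
        omega
    have h6 := ordAt_add_eq (neg_ne_zero.mpr hk0) hσne hB2
    have hb2 : ordAt b (q ^ m2 * c) = μ := by
      rw [hbsum2, h6.2, hA2]
    have hm2eq : m2 = 0 := by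
      by_contra hne
      have := hbreg m2 hne
      omega
    omega
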